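/- In the expansion of det Δ_D(ε), an ε-product ε((i₁,j₁), …, (i_k,j_k)) with i₁ < ⋯ < i_k can only appear with maximal significance among ε-products using the same rows and columns if also j₁ < ⋯ < j_k: given any bijection between row indices {i₁,…,i_k} and column indices {j₁,…,j_k}, the sum Σ 2^{i·δ − σ(i)} over the matching is uniquely minimized by the monotone matching that pairs the ι-th smallest row index with the ι-th smallest column index (δ ≥ D). -/

import Mathlib

open Finset

/-- For a strict monotone sequence of naturals, gaps are at least the index gap. -/
lemma strictMono_gap {k : ℕ} (r : Fin k → ℕ) (hr : StrictMono r) :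
    ∀ (d : ℕ) (a b : Fin k), (b : ℕ) = (a : ℕ) + d → r a + d ≤ r b := by
  intro d
  induction d with
  | zero =>
    intro a b h
    have : a = b := Fin.ext (by omega)
    subst this; omega
  | succ d ih =>
    intro a b h
    have hb' : (a : ℕ) + d < k := by have := b.isLt; omega
    have h1 := ih a ⟨(a : ℕ) + d, hb'⟩ rfl
    have h2 : r ⟨(a : ℕ) + d, hb'⟩ < r b := by
      apply hr
      simp only [Fin.lt_def]
      omega
    omega

/-- Geometric tail bound. -/
lemma geo_bound (e : ℤ) (m : ℕ) :
    ∑ i ∈ Finset.range m, (2:ℝ) ^ (e - (m : ℤ) + (i : ℤ)) < 2 ^ e := by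
  have h2 : (2:ℝ) ≠ 0 := by norm_num
  have : ∑ i ∈ Finset.range m, (2:ℝ) ^ (e - (m : ℤ) + (i : ℤ))
      = (2:ℝ) ^ (e - (m : ℤ)) * ∑ i ∈ Finset.range m, (2:ℝ) ^ i := by
    rw [Finset.mul_sum]
    refine Finset.sum_congr rfl fun i _ => ?_
    rw [zpow_add₀ h2, zpow_natCast]
  rw [this]
  have hgeom : ∑ i ∈ Finset.range m, (2:ℝ) ^ i = 2 ^ m - 1 := by
    have := geom_sum_eq (by norm_num : (2:ℝ) ≠ 1) m
    rw [this]; ring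
  rw [hgeom]
  have hpos : (0:ℝ) < 2 ^ (e - (m:ℤ)) := zpow_pos (by norm_num) _
  have : (2:ℝ) ^ (e - (m:ℤ)) * (2 ^ m - 1) < 2 ^ (e - (m:ℤ)) * 2 ^ m := by
    apply mul_lt_mul_of_pos_left _ hpos
    linarith
  calc (2:ℝ) ^ (e - (m:ℤ)) * (2 ^ m - 1) < 2 ^ (e - (m:ℤ)) * 2 ^ m := this
    _ = 2 ^ e := by
        rw [← zpow_natCast (2:ℝ) m, ← zpow_add₀ h2]
        ring_nf

/-- among all bijections between rows i₁<⋯<i_k and columns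
j₁<⋯<j_k, the exponent sum Σ 2^(i·δ − σ(i)) is uniquely minimized by the
monotone matching (δ ≥ D). -/
theorem stmt12 (n D δ k : ℕ) (hδ : D ≤ δ) (hk : 1 ≤ k)
    (r : Fin k → ℕ) (hr : StrictMono r) (hrn : ∀ ι, r ι < n)
    (c : Fin k → ℕ) (hc : StrictMono c) (hc1 : ∀ ι, 1 ≤ c ι) (hcD : ∀ ι, c ι ≤ D)
    (σ : Equiv.Perm (Fin k)) (hσ : σ ≠ Equiv.refl (Fin k)) :
    ∑ ι, (2:ℝ) ^ ((r ι * δ : ℤ) - (c ι : ℤ)) <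
    ∑ ι, (2:ℝ) ^ ((r ι * δ : ℤ) - (c (σ ι) : ℤ)) := by
  classical
  have h2 : (2:ℝ) ≠ 0 := by norm_num
  have hzpos : ∀ x : ℤ, (0:ℝ) < 2 ^ x := fun x => zpow_pos (by norm_num) x
  have hδ1 : 1 ≤ δ := le_trans (le_trans (hc1 ⟨0, hk⟩) (hcD ⟨0, hk⟩)) hδ
  set f : Fin k → ℝ := fun ι => (2:ℝ) ^ ((r ι * δ : ℤ) - (c ι : ℤ)) with hf
  set g : Fin k → ℝ := fun ι => (2:ℝ) ^ ((r ι * δ : ℤ) - (c (σ ι) : ℤ)) with hg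
  set s : Finset (Fin k) := Finset.univ.filter (fun ι => σ ι ≠ ι) with hs
  have hne : s.Nonempty := by
    rw [Finset.filter_nonempty_iff]
    by_contra h
    push_neg at h
    exact hσ (Equiv.ext fun ι => h ι (mem_univ ι))
  set m : Fin k := s.max' hne with hmdef
  have hm : σ m ≠ m := (Finset.mem_filter.mp (s.max'_mem hne)).2
  have hfix : ∀ ι, m < ι → σ ι = ι := by
    intro ι h
    by_contra hne'
    exact absurd (s.le_max' ι (mem_filter.mpr ⟨mem_univ _, hne'⟩)) (not_le.mpr h)
  have hσm : σ m < m := by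
    rcases lt_or_gt_of_ne hm with h | h
    · exact h
    · exact absurd (σ.injective (hfix (σ m) h).symm) (Ne.symm hm)
  set e : ℤ := (r m * δ : ℤ) - (c m : ℤ) with he
  set A : Finset (Fin k) := Finset.univ.filter (fun ι => ι ≤ m) with hA
  set A' : Finset (Fin k) := Finset.univ.filter (fun ι => ι < m) with hA'
  -- tails agree
  have hsplitf := Finset.sum_filter_add_sum_filter_not Finset.univ (fun ι => ι ≤ m) f
  have hsplitg := Finset.sum_filter_add_sum_filter_not Finset.univ (fun ι => ι ≤ m) g
  have htail : ∑ ι ∈ Finset.univ.filter (fun ι => ¬ ι ≤ m), f ι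
      = ∑ ι ∈ Finset.univ.filter (fun ι => ¬ ι ≤ m), g ι := by
    refine Finset.sum_congr rfl fun ι hι => ?_
    have : σ ι = ι := hfix ι (not_le.mp (mem_filter.mp hι).2)
    simp [hf, hg, this]
  -- head: strict inequality on A
  have hmem : m ∈ A := mem_filter.mpr ⟨mem_univ _, le_refl m⟩
  have hAins : A = insert m A' := by
    ext ι
    simp only [hA, hA', mem_filter, mem_insert, mem_univ, true_and]
    constructor
    · intro h; rcases lt_or_eq_of_le h with h | h
      · exact Or.inr h
      · exact Or.inl h
    · rintro (h | h)
      · exact le_of_eq h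
      · exact le_of_lt h
  have hmni : m ∉ A' := by simp [hA']
  -- bound on the head of the identity sum
  have hterm : ∀ ι ∈ A', f ι ≤ (2:ℝ) ^ (e - (m : ℤ) + (ι : ℤ)) := by
    intro ι hι
    have hlt : ι < m := (mem_filter.mp hι).2
    have hltn : (ι : ℕ) < (m : ℕ) := hlt
    have hgap := strictMono_gap r hr ((m : ℕ) - (ι : ℕ)) ι m (by omega)
    apply zpow_le_zpow_right₀ (by norm_num : (1:ℝ) ≤ 2)
    have hc1' : (1 : ℤ) ≤ (c ι : ℤ) := by exact_mod_cast hc1 ι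
    have hcm : (c m : ℤ) ≤ (δ : ℤ) := by exact_mod_cast le_trans (hcD m) hδ
    have hgap' : (r ι : ℤ) + ((m : ℕ) - (ι : ℕ) : ℕ) ≤ (r m : ℤ) := by exact_mod_cast hgap
    have hd : (((m : ℕ) - (ι : ℕ) : ℕ) : ℤ) = (m : ℤ) - (ι : ℤ) := by
      push_cast; omega
    rw [hd] at hgap'
    set d : ℤ := (m : ℤ) - (ι : ℤ) with hdd
    have hd1 : 1 ≤ d := by simp [hdd]; omega
    have hδ1' : (1 : ℤ) ≤ (δ : ℤ) := by exact_mod_cast hδ1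
    -- want: r ι * δ - c ι ≤ (r m * δ - c m) - d
    have hmul : (r ι : ℤ) * δ + d * δ ≤ (r m : ℤ) * δ := by
      have := mul_le_mul_of_nonneg_right hgap' (by positivity : (0:ℤ) ≤ (δ:ℤ))
      nlinarith
    have hkey : (c m : ℤ) + d ≤ d * δ + 1 := by nlinarith
    simp only [he]
    omega
  have hhead : ∑ ι ∈ A', f ι < (2:ℝ) ^ e := by
    calc ∑ ι ∈ A', f ι ≤ ∑ ι ∈ A', (2:ℝ) ^ (e - (m : ℤ) + (ι : ℤ)) :=
          Finset.sum_le_sum hterm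
      _ = ∑ i ∈ Finset.range (m : ℕ), (2:ℝ) ^ (e - ((m:ℕ) : ℤ) + (i : ℤ)) := by
          refine Finset.sum_bij' (fun ι _ => (ι : ℕ)) (fun i hi => ⟨i, lt_trans (Finset.mem_range.mp hi) m.isLt⟩) ?_ ?_ ?_ ?_ ?_
          · intro ι hι
            exact Finset.mem_range.mpr ((mem_filter.mp hι).2)
          · intro i hi
            exact mem_filter.mpr ⟨mem_univ _, Finset.mem_range.mp hi⟩
          · intro ι hι; exact Fin.ext rfl
          · intro i hi; rfl
          · intro ι hι; rfl
      _ < (2:ℝ) ^ e := geo_bound e (m : ℕ)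
  -- the single big term in the σ-sum
  have hbig : (2:ℝ) ^ (e + 1) ≤ g m := by
    apply zpow_le_zpow_right₀ (by norm_num : (1:ℝ) ≤ 2)
    have : (c (σ m) : ℤ) < (c m : ℤ) := by exact_mod_cast hc hσm
    simp only [he]; omega
  have hsingle : g m ≤ ∑ ι ∈ A, g ι :=
    Finset.single_le_sum (f := g) (fun ι _ => le_of_lt (hzpos _)) hmem
  have hheadlt : ∑ ι ∈ A, f ι < ∑ ι ∈ A, g ι := by
    have hfm : f m = (2:ℝ) ^ e := by simp [hf, he]
    have h1 : ∑ ι ∈ A, f ι = f m + ∑ ι ∈ A', f ι := by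
      rw [hAins, Finset.sum_insert hmni]
    have h2 : (2:ℝ) ^ (e + 1) = 2 ^ e + 2 ^ e := by
      rw [zpow_add_one₀ h2]; ring
    calc ∑ ι ∈ A, f ι = f m + ∑ ι ∈ A', f ι := h1
      _ < (2:ℝ) ^ e + 2 ^ e := by rw [hfm]; linarith
      _ = (2:ℝ) ^ (e + 1) := h2.symm
      _ ≤ g m := hbig
      _ ≤ ∑ ι ∈ A, g ι := hsingle
  calc ∑ ι, f ι = ∑ ι ∈ A, f ι + ∑ ι ∈ Finset.univ.filter (fun ι => ¬ ι ≤ m), f ι :=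
        hsplitf.symm
    _ < ∑ ι ∈ A, g ι + ∑ ι ∈ Finset.univ.filter (fun ι => ¬ ι ≤ m), g ι := by
        rw [htail]; exact add_lt_add_of_lt_of_le hheadlt le_rfl
    _ = ∑ ι, g ι := hsplitg
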